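/- Chi-square lower tail bound used: if L_n ∼ χ²_{2n}(0) (central chi-square with 2n degrees of freedom) and γ̃ ≥ 2n, then log P[L_n ≥ γ̃] ≥ −(1/2)[ (γ̃ − 2n) log e + (2n−2) log(γ̃/(2n)) + log(2n) ] − log 2. -/

import Mathlib

open MeasureTheory

/-- Density of the (central) chi-square distribution with `k` degrees of freedom. -/
noncomputable def chiSqPDF (k : ℕ) (t : ℝ) : ℝ :=
  if 0 < t then
    t ^ ((k : ℝ) / 2 - 1) * Real.exp (-t / 2) / (2 ^ ((k : ℝ) / 2) * Real.Gamma ((k : ℝ) / 2))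
  else 0

/-- Density of the noncentral chi-square distribution with `k` degrees of freedom and
noncentrality parameter `lam`, written as a Poisson mixture of central chi-square densities. -/
noncomputable def ncChiSqPDF (k : ℕ) (lam : ℝ) (t : ℝ) : ℝ :=
  ∑' j : ℕ, (Real.exp (-lam / 2) * (lam / 2) ^ j / j.factorial) * chiSqPDF (k + 2 * j) t

/-- Stirling-type upper bound: `log n! ≤ 1 + (1/2) log n + n log n − n` for `n = m+1 ≥ 1`. -/
lemma log_factorial_le (m : ℕ) :
    Real.log ((m + 1).factorial : ℝ) ≤
      1 + (1 / 2) * Real.log (m + 1) + (m + 1 : ℝ) * Real.log (m + 1) - (m + 1 : ℝ) := by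
  have h1 : Real.log (Stirling.stirlingSeq (m + 1)) ≤ Real.log (Stirling.stirlingSeq 1) :=
    Stirling.log_stirlingSeq'_antitone (Nat.zero_le m)
  rw [Stirling.log_stirlingSeq_formula, Stirling.stirlingSeq_one] at h1
  have hm1 : (0 : ℝ) < (m + 1 : ℕ) := by positivity
  have hlog1 : Real.log (Real.exp 1 / Real.sqrt 2) = 1 - Real.log 2 / 2 := by
    rw [Real.log_div (Real.exp_ne_zero 1) (by positivity), Real.log_exp,
      Real.log_sqrt (by norm_num)]
  have hlog2 : Real.log (2 * ((m + 1 : ℕ) : ℝ)) = Real.log 2 + Real.log ((m + 1 : ℕ) : ℝ) :=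
    Real.log_mul (by norm_num) (ne_of_gt hm1)
  have hlog3 : Real.log (((m + 1 : ℕ) : ℝ) / Real.exp 1) = Real.log ((m + 1 : ℕ) : ℝ) - 1 := by
    rw [Real.log_div (ne_of_gt hm1) (Real.exp_ne_zero 1), Real.log_exp]
  rw [hlog1, hlog2, hlog3] at h1
  push_cast at h1 ⊢
  linarith

/-- Chi-square lower tail bound: for `L_n ∼ χ²_{2n}(0)` and `γ̃ ≥ 2n`,
`log P[L_n ≥ γ̃] ≥ −(1/2)[(γ̃ − 2n) + (2n−2) log(γ̃/(2n)) + log(2n)] − log 2`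
(natural logarithms, so `log e = 1`). -/
theorem chiSq_tail_lb (n : ℕ) (hn : 0 < n) (γ : ℝ) (hγ : (2 * n : ℝ) ≤ γ) :
    -(1 / 2) * ((γ - 2 * n) + (2 * (n : ℝ) - 2) * Real.log (γ / (2 * n)) + Real.log (2 * n))
        - Real.log 2
      ≤ Real.log (∫ t in Set.Ioi γ, chiSqPDF (2 * n) t) := by
  obtain ⟨m, rfl⟩ : ∃ m, n = m + 1 := ⟨n - 1, (Nat.succ_pred_eq_of_pos hn).symm⟩
  set n : ℕ := m + 1 with hn_def
  have hn1 : (1 : ℝ) ≤ (n : ℝ) := by exact_mod_cast Nat.one_le_cast.mpr hn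
  have hnpos : (0 : ℝ) < (n : ℝ) := by linarith
  have h2n : (0 : ℝ) < 2 * (n : ℝ) := by linarith
  have hγ0 : (0 : ℝ) < γ := lt_of_lt_of_le h2n hγ
  set s : ℝ := (n : ℝ) - 1 with hs_def
  have hs0 : (0 : ℝ) ≤ s := by simp [hs_def]; linarith
  have hΓ : 0 < Real.Gamma (n : ℝ) := Real.Gamma_pos_of_pos hnpos
  set C : ℝ := 2 ^ (n : ℝ) * Real.Gamma (n : ℝ) with hC_def
  have hC : 0 < C := mul_pos (Real.rpow_pos_of_pos two_pos _) hΓ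
  -- the pdf on `Ioi γ`
  have hpdf : ∀ t ∈ Set.Ioi γ, chiSqPDF (2 * n) t = t ^ s * Real.exp (-t / 2) / C := by
    intro t ht
    have ht0 : 0 < t := hγ0.trans ht
    have hcast : ((2 * n : ℕ) : ℝ) / 2 = (n : ℝ) := by push_cast; ring
    rw [chiSqPDF, if_pos ht0, hcast, hs_def, hC_def]
  -- lower bounding function
  have hle : ∀ t ∈ Set.Ioi γ,
      γ ^ s * Real.exp (-(2⁻¹ * t)) / C ≤ chiSqPDF (2 * n) t := by
    intro t ht
    rw [hpdf t ht]
    have he : Real.exp (-(2⁻¹ * t)) = Real.exp (-t / 2) := by ring_nf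
    rw [he]
    gcongr
    exact le_of_lt ht
  -- integrability of the pdf
  have hIntU : IntegrableOn (fun t => chiSqPDF (2 * n) t) (Set.Ioi γ) := by
    have h0 : IntegrableOn (fun t : ℝ => t ^ s * Real.exp (-(1 / 2) * t ^ (1 : ℝ))) (Set.Ioi 0) :=
      integrableOn_rpow_mul_exp_neg_mul_rpow (by linarith) (by norm_num) (by norm_num)
    have h1 : IntegrableOn (fun t : ℝ => t ^ s * Real.exp (-t / 2)) (Set.Ioi γ) := by
      refine ((h0.mono_set (Set.Ioi_subset_Ioi hγ0.le)).congr_fun (fun t _ => ?_)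
        measurableSet_Ioi)
      beta_reduce; rw [Real.rpow_one]; ring_nf
    exact MeasureTheory.IntegrableOn.congr_fun (h1.div_const C)
      (fun t ht => (hpdf t ht).symm) measurableSet_Ioi
  -- integrability of the lower bound
  have hIntL : IntegrableOn (fun t : ℝ => γ ^ s * Real.exp (-(2⁻¹ * t)) / C) (Set.Ioi γ) := by
    have := (exp_neg_integrableOn_Ioi γ (show (0:ℝ) < 2⁻¹ by norm_num))
    simpa [neg_mul, mul_div_assoc, IntegrableOn] using (this.const_mul (γ ^ s)).div_const C
  -- value of the lower bound integral
  have hval : ∫ t in Set.Ioi γ, γ ^ s * Real.exp (-(2⁻¹ * t)) / C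
      = 2 * Real.exp (-γ / 2) * γ ^ s / C := by
    rw [MeasureTheory.integral_div, MeasureTheory.integral_const_mul]
    have h := MeasureTheory.integral_comp_mul_left_Ioi (fun x => Real.exp (-x)) γ
      (show (0:ℝ) < 2⁻¹ by norm_num)
    simp only [smul_eq_mul] at h
    rw [integral_exp_neg_Ioi] at h
    rw [show (fun x : ℝ => Real.exp (-(2⁻¹ * x))) = fun x : ℝ => Real.exp (-x/2) from
      funext fun x => by ring_nf] at h ⊢
    rw [h]
    ring_nf
  set A : ℝ := 2 * Real.exp (-γ / 2) * γ ^ s / C with hA_def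
  have hA0 : 0 < A := by positivity
  have hAle : A ≤ ∫ t in Set.Ioi γ, chiSqPDF (2 * n) t := by
    rw [← hval]
    exact MeasureTheory.setIntegral_mono_on hIntL hIntU measurableSet_Ioi hle
  refine le_trans ?_ (Real.log_le_log hA0 hAle)
  -- now pure log arithmetic
  have hlogA : Real.log A =
      Real.log 2 + (-γ / 2) + s * Real.log γ
        - ((n : ℝ) * Real.log 2 + Real.log (Real.Gamma (n : ℝ))) := by
    rw [hA_def, hC_def, Real.log_div (by positivity) (by positivity),
      Real.log_mul (by positivity) (by positivity),
      Real.log_mul (by norm_num) (Real.exp_ne_zero _),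
      Real.log_mul (by positivity) (ne_of_gt hΓ),
      Real.log_exp, Real.log_rpow hγ0, Real.log_rpow two_pos]
  rw [hlogA]
  have hlogdiv : Real.log (γ / (2 * (n : ℝ))) = Real.log γ - Real.log (2 * (n : ℝ)) :=
    Real.log_div (ne_of_gt hγ0) (ne_of_gt h2n)
  have hlog2n : Real.log (2 * (n : ℝ)) = Real.log 2 + Real.log (n : ℝ) :=
    Real.log_mul (by norm_num) (ne_of_gt hnpos)
  have hγlog : Real.log (2 * (n : ℝ)) ≤ Real.log γ := Real.log_le_log h2n hγ
  -- Gamma vs factorial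
  have hΓfac : Real.log (Real.Gamma (n : ℝ)) = Real.log ((n.factorial : ℝ)) - Real.log (n : ℝ) := by
    have h1 : (n.factorial : ℝ) = (n : ℝ) * Real.Gamma (n : ℝ) := by
      have h2 : Real.Gamma ((m : ℝ) + 1) = (m.factorial : ℝ) := Real.Gamma_nat_eq_factorial m
      have h3 : ((n : ℕ) : ℝ) = (m : ℝ) + 1 := by push_cast [hn_def]; ring
      rw [h3, h2, hn_def]
      push_cast [Nat.factorial_succ]
      ring
    rw [h1, Real.log_mul (ne_of_gt hnpos) (ne_of_gt hΓ)]
    ring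
  have hstir : Real.log ((n.factorial : ℝ)) ≤
      1 + (1 / 2) * Real.log (n : ℝ) + (n : ℝ) * Real.log (n : ℝ) - (n : ℝ) := by
    have := log_factorial_le m
    have h3 : ((n : ℕ) : ℝ) = (m : ℝ) + 1 := by push_cast [hn_def]; ring
    rw [hn_def]
    push_cast
    convert this using 3
  have hlog2lb : (0.6931471803 : ℝ) < Real.log 2 := Real.log_two_gt_d9
  have hlogn0 : 0 ≤ Real.log (n : ℝ) := Real.log_nonneg hn1
  rw [hlogdiv, hlog2n] at *
  have hkey : 0 ≤ (2 * (n : ℝ) - 2) * (Real.log γ - (Real.log 2 + Real.log (n : ℝ))) :=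
    mul_nonneg (by linarith) (by linarith)
  nlinarith [hkey, hstir, hΓfac, hlog2lb, hlogn0, hn1, hγlog,
    mul_le_mul_of_nonneg_left hγlog (by linarith : (0:ℝ) ≤ (n:ℝ) - 1)]
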